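/- Fix integers $n \geq 1$, $0 \leq j \leq n-1$. For $m \geq 1-j$ and $0 \leq r \leq n-1$, define $S_{m,r} = \sum_{i=j+1}^{n} \binom{n}{i}\binom{j+m-1}{i-1-r}\binom{i-1}{j}$ and $T_{m,r} = \sum_{i=1}^{n-j} \binom{n-i}{j}\binom{m+n-i-1}{n-i-r}$. Then $S_{m,r} = T_{m,r}$ for all such $m$ and $r$. -/

import Mathlib

open Finset

/-- Integer binomial coefficient: `chooseZ a b` is the binomial coefficient `C(a, b)`,
which vanishes when `b < 0` or `b > a`, and satisfies `chooseZ 0 0 = 1`. -/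
def chooseZ (a b : ℤ) : ℤ :=
  if 0 ≤ b ∧ b ≤ a then (a.toNat.choose b.toNat : ℤ) else 0

lemma chooseZ_coe (M k r : ℕ) :
    chooseZ (M : ℤ) ((k : ℤ) - r) = if r ≤ k then (M.choose (k - r) : ℤ) else 0 := by
  unfold chooseZ
  by_cases h : r ≤ k
  · by_cases h2 : k - r ≤ M
    · have hcond : (0 : ℤ) ≤ (k : ℤ) - r ∧ (k : ℤ) - r ≤ (M : ℤ) := by
        constructor <;> omega
      rw [if_pos hcond, if_pos h]
      have e1 : ((M : ℤ)).toNat = M := by omega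
      have e2 : ((k : ℤ) - r).toNat = k - r := by omega
      rw [e1, e2]
    · have hcond : ¬ ((0 : ℤ) ≤ (k : ℤ) - r ∧ (k : ℤ) - r ≤ (M : ℤ)) := by omega
      rw [if_neg hcond, if_pos h, Nat.choose_eq_zero_of_lt (by omega)]
      simp
  · have hcond : ¬ ((0 : ℤ) ≤ (k : ℤ) - r ∧ (k : ℤ) - r ≤ (M : ℤ)) := by omega
    rw [if_neg hcond, if_neg h]

lemma pascal_ite (A k r : ℕ) :
    (if r ≤ k then (A + 1).choose (k - r) else 0)
      = (if r ≤ k then A.choose (k - r) else 0)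
        + (if r + 1 ≤ k then A.choose (k - (r + 1)) else 0) := by
  by_cases h : r + 1 ≤ k
  · have h' : r ≤ k := by omega
    simp only [if_pos h, if_pos h']
    have hkr : k - r = (k - (r + 1)) + 1 := by omega
    rw [hkr, Nat.choose_succ_succ']
    omega
  · by_cases h' : r ≤ k
    · have hk : k = r := by omega
      subst hk
      simp [h]
    · simp [h, h']

lemma key (n j : ℕ) (hn : 1 ≤ n) (M : ℕ) : ∀ r : ℕ,
    ∑ k ∈ Icc j (n - 1), n.choose (k + 1) * (k.choose j *
        (if r ≤ k then M.choose (k - r) else 0))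
      = ∑ k ∈ Icc j (n - 1), k.choose j *
        (if r ≤ k then (M + (k - j)).choose (k - r) else 0) := by
  induction M with
  | zero =>
    intro r
    by_cases hrj : j ≤ r
    · -- both sides equal r.choose j * n.choose (r+1)
      have hL : ∑ k ∈ Icc j (n - 1), n.choose (k + 1) * (k.choose j *
          (if r ≤ k then Nat.choose 0 (k - r) else 0))
          = r.choose j * n.choose (r + 1) := by
        rw [Finset.sum_congr rfl (g := fun k =>
            if k = r then n.choose (r + 1) * r.choose j else 0)]
        · rw [Finset.sum_ite_eq' (Icc j (n-1)) r (fun _ => n.choose (r + 1) * r.choose j)]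
          by_cases hmem : r ∈ Icc j (n - 1)
          · rw [if_pos hmem]; ring
          · rw [if_neg hmem]
            have : n.choose (r + 1) = 0 := by
              apply Nat.choose_eq_zero_of_lt
              simp [Finset.mem_Icc] at hmem
              omega
            rw [this]; ring
        · intro k hk
          by_cases hkr : k = r
          · subst hkr
            simp [Nat.mul_comm]
          · rw [if_neg hkr]
            by_cases h2 : r ≤ k
            · rw [if_pos h2, Nat.choose_eq_zero_of_lt (show 0 < k - r by omega)]
              ring
            · rw [if_neg h2]; ring
      have hR : ∑ k ∈ Icc j (n - 1), k.choose j *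
          (if r ≤ k then (0 + (k - j)).choose (k - r) else 0)
          = r.choose j * n.choose (r + 1) := by
        rw [← Finset.sum_subset (Finset.Icc_subset_Icc_left hrj)]
        · have : ∀ k ∈ Icc r (n - 1), k.choose j *
              (if r ≤ k then (0 + (k - j)).choose (k - r) else 0)
              = r.choose j * k.choose r := by
            intro k hk
            simp only [Finset.mem_Icc] at hk
            rw [if_pos hk.1, Nat.zero_add]
            have h1 : (k - j).choose (k - r) = (k - j).choose (r - j) := by
              have := Nat.choose_symm (n := k - j) (k := r - j) (by omega)
              rwa [show k - j - (r - j) = k - r by omega] at this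
            rw [h1, ← Nat.choose_mul hrj]
            ring
          rw [Finset.sum_congr rfl this, ← Finset.mul_sum, Nat.sum_Icc_choose,
            show n - 1 + 1 = n by omega]
        · intro k hk hk2
          simp only [Finset.mem_Icc] at hk hk2
          rw [if_neg (by omega)]
          ring
      rw [hL, hR]
    · -- r < j : both sides zero
      have hz1 : ∀ k ∈ Icc j (n - 1), n.choose (k + 1) * (k.choose j *
          (if r ≤ k then Nat.choose 0 (k - r) else 0)) = 0 := by
        intro k hk
        simp only [Finset.mem_Icc] at hk
        rw [if_pos (by omega), Nat.choose_eq_zero_of_lt (show 0 < k - r by omega)]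
        ring
      have hz2 : ∀ k ∈ Icc j (n - 1), k.choose j *
          (if r ≤ k then (0 + (k - j)).choose (k - r) else 0) = 0 := by
        intro k hk
        simp only [Finset.mem_Icc] at hk
        rw [if_pos (by omega),
          Nat.choose_eq_zero_of_lt (show 0 + (k - j) < k - r by omega)]
        ring
      rw [Finset.sum_eq_zero hz1, Finset.sum_eq_zero hz2]
  | succ M ih =>
    intro r
    have hL : ∑ k ∈ Icc j (n - 1), n.choose (k + 1) * (k.choose j *
        (if r ≤ k then (M + 1).choose (k - r) else 0))
        = (∑ k ∈ Icc j (n - 1), n.choose (k + 1) * (k.choose j *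
            (if r ≤ k then M.choose (k - r) else 0)))
          + ∑ k ∈ Icc j (n - 1), n.choose (k + 1) * (k.choose j *
            (if r + 1 ≤ k then M.choose (k - (r + 1)) else 0)) := by
      rw [← Finset.sum_add_distrib]
      apply Finset.sum_congr rfl
      intro k hk
      rw [pascal_ite M k r]
      ring
    have hR : ∑ k ∈ Icc j (n - 1), k.choose j *
        (if r ≤ k then (M + 1 + (k - j)).choose (k - r) else 0)
        = (∑ k ∈ Icc j (n - 1), k.choose j *
            (if r ≤ k then (M + (k - j)).choose (k - r) else 0))
          + ∑ k ∈ Icc j (n - 1), k.choose j *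
            (if r + 1 ≤ k then (M + (k - j)).choose (k - (r + 1)) else 0) := by
      rw [← Finset.sum_add_distrib]
      apply Finset.sum_congr rfl
      intro k hk
      rw [show M + 1 + (k - j) = (M + (k - j)) + 1 by omega, pascal_ite (M + (k - j)) k r]
      ring
    rw [hL, hR, ih r, ih (r + 1)]

/-- Fix integers `n ≥ 1`, `0 ≤ j ≤ n-1`. For `m ≥ 1-j` and `0 ≤ r ≤ n-1`,
`S_{m,r} = ∑_{i=j+1}^{n} C(n,i) C(j+m-1, i-1-r) C(i-1,j)` equals
`T_{m,r} = ∑_{i=1}^{n-j} C(n-i,j) C(m+n-i-1, n-i-r)`. -/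
theorem S_eq_T (n j : ℕ) (hn : 1 ≤ n) (hj : j ≤ n - 1) (m : ℤ) (hm : 1 - (j : ℤ) ≤ m)
    (r : ℕ) (hr : r ≤ n - 1) :
    ∑ i ∈ Finset.Icc (j + 1) n,
        (n.choose i : ℤ) * chooseZ ((j : ℤ) + m - 1) ((i : ℤ) - 1 - r) * ((i - 1).choose j : ℤ)
      = ∑ i ∈ Finset.Icc 1 (n - j),
        ((n - i).choose j : ℤ) * chooseZ (m + (n : ℤ) - i - 1) ((n : ℤ) - i - r) := by
  set M : ℕ := (m + (j : ℤ) - 1).toNat with hMdef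
  have hM : (j : ℤ) + m - 1 = (M : ℤ) := by omega
  have hL : ∑ i ∈ Finset.Icc (j + 1) n,
      (n.choose i : ℤ) * chooseZ ((j : ℤ) + m - 1) ((i : ℤ) - 1 - r) * ((i - 1).choose j : ℤ)
      = (((∑ k ∈ Icc j (n - 1), n.choose (k + 1) * (k.choose j *
          (if r ≤ k then M.choose (k - r) else 0))) : ℕ) : ℤ) := by
    rw [Nat.cast_sum]
    refine Finset.sum_nbij' (fun i => i - 1) (fun k => k + 1) ?_ ?_ ?_ ?_ ?_
    · intro a ha; simp only [Finset.mem_Icc] at *; (try dsimp only); omega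
    · intro a ha; simp only [Finset.mem_Icc] at *; (try dsimp only); omega
    · intro a ha; simp only [Finset.mem_Icc] at ha; (try dsimp only); omega
    · intro a ha; simp only [Finset.mem_Icc] at ha; (try dsimp only); omega
    · intro i hi
      simp only [Finset.mem_Icc] at hi
      have h1 : i - 1 + 1 = i := by omega
      have h2 : (i : ℤ) - 1 - r = ((i - 1 : ℕ) : ℤ) - (r : ℤ) := by omega
      rw [hM, h2, chooseZ_coe M (i - 1) r, h1]
      push_cast [apply_ite (fun x : ℕ => (x : ℤ))]
      ring
  have hR : ∑ i ∈ Finset.Icc 1 (n - j),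
      ((n - i).choose j : ℤ) * chooseZ (m + (n : ℤ) - i - 1) ((n : ℤ) - i - r)
      = (((∑ k ∈ Icc j (n - 1), k.choose j *
          (if r ≤ k then (M + (k - j)).choose (k - r) else 0)) : ℕ) : ℤ) := by
    rw [Nat.cast_sum]
    refine Finset.sum_nbij' (fun i => n - i) (fun k => n - k) ?_ ?_ ?_ ?_ ?_
    · intro a ha; simp only [Finset.mem_Icc] at *; (try dsimp only); omega
    · intro a ha; simp only [Finset.mem_Icc] at *; (try dsimp only); omega
    · intro a ha; simp only [Finset.mem_Icc] at ha; (try dsimp only); omega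
    · intro a ha; simp only [Finset.mem_Icc] at ha; (try dsimp only); omega
    · intro i hi
      simp only [Finset.mem_Icc] at hi
      have h1 : m + (n : ℤ) - i - 1 = ((M + (n - i - j) : ℕ) : ℤ) := by
        push_cast; omega
      have h2 : (n : ℤ) - i - r = ((n - i : ℕ) : ℤ) - (r : ℤ) := by
        push_cast; omega
      rw [h1, h2, chooseZ_coe (M + (n - i - j)) (n - i) r,
        show n - i - j = (n - i) - j from rfl]
      push_cast [apply_ite (fun x : ℕ => (x : ℤ))]
      ring
  rw [hL, hR]
  exact_mod_cast congrArg (fun x : ℕ => (x : ℤ)) (key n j hn M r)
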